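/- For 1 <= s <= t and 0 <= g <= s, if F_1 and F_2 are two distinct g-good-neighbor conditional faulty sets of LeTQ(s,t) with |F_1|, |F_2| <= 2^g(s-g+2)-1, then F_1 union F_2 is a proper subset of the vertex set of LeTQ(s,t). -/

import Mathlib

/-- Flip bit `k` of the binary string `x`. -/
def bflip {n : ℕ} (x : Fin n → Bool) (k : Fin n) : Fin n → Bool :=
  Function.update x k (!(x k))

/-- Locally twisted cube adjacency on `n`-bit binary strings:
either flip bit `k` for some `k ≤ 1`; or, for some `k ≥ 2`, flip bits `k` and `k-1`
when bit 0 is `1`, resp. flip only bit `k` when bit 0 is `0`. -/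
def cubeAdj (n : ℕ) (x y : Fin n → Bool) : Prop :=
  (∃ k : Fin n, (k : ℕ) ≤ 1 ∧ y = bflip x k) ∨
  (∃ k : Fin n, 2 ≤ (k : ℕ) ∧
    ((∃ h0 : 0 < n, x ⟨0, h0⟩ = true ∧
        y = bflip (bflip x k) ⟨(k : ℕ) - 1, lt_of_le_of_lt (Nat.sub_le _ _) k.isLt⟩) ∨
     (∃ h0 : 0 < n, x ⟨0, h0⟩ = false ∧ y = bflip x k)))

/-- The locally twisted cube `LTQ_n`. -/
def LTQ (n : ℕ) : SimpleGraph (Fin n → Bool) where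
  Adj x y := x ≠ y ∧ (cubeAdj n x y ∨ cubeAdj n y x)
  symm := ⟨fun _ _ h => ⟨h.1.symm, h.2.symm⟩⟩
  loopless := ⟨fun _ h => h.1 rfl⟩

/-- A vertex of `LeTQ(s,t)`: the `a`-bits, the `b`-bits and the bit `c`. -/
abbrev LeTQVert (s t : ℕ) := (Fin s → Bool) × (Fin t → Bool) × Bool

/-- One-sided adjacency condition of the locally exchanged twisted cube. -/
def LeTQAdjOne (s t : ℕ) (u v : LeTQVert s t) : Prop :=
  (u.1 = v.1 ∧ u.2.1 = v.2.1 ∧ u.2.2 = !v.2.2) ∨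
  (u.2.2 = true ∧ v.2.2 = true ∧ u.1 = v.1 ∧ cubeAdj t u.2.1 v.2.1) ∨
  (u.2.2 = false ∧ v.2.2 = false ∧ u.2.1 = v.2.1 ∧ cubeAdj s u.1 v.1)

/-- The locally exchanged twisted cube `LeTQ(s,t)`. -/
def LeTQ (s t : ℕ) : SimpleGraph (LeTQVert s t) where
  Adj u v := u ≠ v ∧ (LeTQAdjOne s t u v ∨ LeTQAdjOne s t v u)
  symm := ⟨fun _ _ h => ⟨h.1.symm, h.2.symm⟩⟩
  loopless := ⟨fun _ h => h.1 rfl⟩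

/-- Two distinct small g-good-neighbor faulty sets cannot cover all vertices. -/
theorem stmt12 (s t g : ℕ) (hs : 1 ≤ s) (hst : s ≤ t) (hg : g ≤ s)
    (F1 F2 : Set (LeTQVert s t)) (hne : F1 ≠ F2)
    (hg1 : ∀ v ∉ F1, g ≤ ((LeTQ s t).neighborSet v \ F1).ncard)
    (hg2 : ∀ v ∉ F2, g ≤ ((LeTQ s t).neighborSet v \ F2).ncard)
    (hc1 : F1.ncard ≤ 2 ^ g * (s - g + 2) - 1)
    (hc2 : F2.ncard ≤ 2 ^ g * (s - g + 2) - 1) :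
    F1 ∪ F2 ≠ Set.univ := by
  intro h
  have hbound : 2 ^ g * (s - g + 2) ≤ 2 ^ (s + 1) := by
    calc 2 ^ g * (s - g + 2) ≤ 2 ^ g * 2 ^ (s - g + 1) := by
          refine Nat.mul_le_mul_left _ ?_
          have := Nat.lt_two_pow_self (n := s - g + 1)
          omega
      _ = 2 ^ (s + 1) := by
          rw [← pow_add]
          congr 1
          omega
  have hcard : (Set.univ : Set (LeTQVert s t)).ncard = 2 ^ s * (2 ^ t * 2) := by
    rw [Set.ncard_univ, Nat.card_eq_fintype_card]
    simp [LeTQVert, Fintype.card_prod]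
  have hlt : 2 ^ s * (2 ^ t * 2) ≤ (F1 ∪ F2).ncard := by
    rw [← hcard, h]
  have hun : (F1 ∪ F2).ncard ≤ F1.ncard + F2.ncard := Set.ncard_union_le _ _
  have h1 : 2 ^ (s + 2) ≤ 2 ^ s * (2 ^ t * 2) := by
    have : 2 ^ (s + 2) ≤ 2 ^ (s + t + 1) := Nat.pow_le_pow_right (by norm_num) (by omega)
    calc 2 ^ (s + 2) ≤ 2 ^ (s + t + 1) := this
      _ = 2 ^ s * (2 ^ t * 2) := by ring
  have hgpos : 1 ≤ 2 ^ g * (s - g + 2) := Nat.one_le_iff_ne_zero.mpr (by positivity)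
  have : 2 ^ (s + 2) = 2 ^ (s + 1) + 2 ^ (s + 1) := by ring
  omega
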